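/- For ε > 0, the one-dimensional integral ∫_{-1}^{1} ((1+|x|)/(1-|x|))^{-ε} dx equals 2·₂F₁(1, ε; 2+ε; -1)/(1+ε), where ₂F₁ is the Gauss hypergeometric function. -/

import Mathlib

open scoped BigOperators

/-- Pochhammer symbol (rising factorial) for a real argument. -/
noncomputable def poch (q : ℝ) (n : ℕ) : ℝ := ∏ i ∈ Finset.range n, (q + i)

/-- Gauss hypergeometric function ₂F₁ as a power series. -/
noncomputable def gaussHyp (a b c z : ℝ) : ℝ :=
  ∑' n : ℕ, poch a n * poch b n / poch c n * z ^ n / (Nat.factorial n)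

open MeasureTheory intervalIntegral Set Filter

lemma poch_succ (q : ℝ) (n : ℕ) : poch q (n+1) = poch q n * (q + n) := by
  simp [poch, Finset.prod_range_succ]

lemma poch_one (n : ℕ) : poch 1 n = n.factorial := by
  induction n with
  | zero => simp [poch]
  | succ n ih => rw [poch_succ, ih]; push_cast [Nat.factorial_succ]; ring

lemma poch_pos {q : ℝ} (hq : 0 < q) (n : ℕ) : 0 < poch q n :=
  Finset.prod_pos fun i _ => by positivity

lemma poch_ratio {ε : ℝ} (hε : 0 < ε) (n : ℕ) :
    poch ε n / poch (2+ε) n = ε * (1+ε) / ((ε+n) * (ε+n+1)) := by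
  have key : ∀ m : ℕ, poch ε m * ((ε+m) * (ε+m+1)) = poch (2+ε) m * (ε * (1+ε)) := by
    intro m
    induction m with
    | zero => simp [poch]; left; ring
    | succ m ih =>
      rw [poch_succ, poch_succ]
      push_cast
      push_cast at ih
      linear_combination (ε + m + 2) * ih
  have h1 : poch (2+ε) n ≠ 0 := (poch_pos (by linarith) n).ne'
  have hn1 : (0:ℝ) < ε + n := by positivity
  have hn2 : (0:ℝ) < ε + n + 1 := by positivity
  rw [div_eq_div_iff h1 (by positivity)]
  linear_combination key n

lemma b_eq {ε : ℝ} (hε : 0 < ε) (n : ℕ) :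
    (ε+(n:ℝ))⁻¹ - (ε+n+1)⁻¹ = 1 / ((ε+n) * (ε+n+1)) := by
  have h1 : (0:ℝ) < ε+(n:ℝ) := by positivity
  have h2 : (0:ℝ) < ε+(n:ℝ)+1 := by positivity
  field_simp
  ring

lemma b_nonneg {ε : ℝ} (hε : 0 < ε) (n : ℕ) :
    0 ≤ (ε+(n:ℝ))⁻¹ - (ε+n+1)⁻¹ := by
  rw [b_eq hε]
  positivity

lemma b_anti {ε : ℝ} (hε : 0 < ε) {n m : ℕ} (h : n ≤ m) :
    (ε+(m:ℝ))⁻¹ - (ε+m+1)⁻¹ ≤ (ε+(n:ℝ))⁻¹ - (ε+n+1)⁻¹ := by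
  rw [b_eq hε, b_eq hε]
  have hc : (n:ℝ) ≤ m := Nat.cast_le.mpr h
  gcongr

lemma hasSum_b {ε : ℝ} (hε : 0 < ε) :
    HasSum (fun n : ℕ => (ε+(n:ℝ))⁻¹ - (ε+n+1)⁻¹) ε⁻¹ := by
  rw [hasSum_iff_tendsto_nat_of_nonneg (b_nonneg hε)]
  have hps : ∀ N : ℕ, ∑ n ∈ Finset.range N, ((ε+(n:ℝ))⁻¹ - (ε+n+1)⁻¹)
      = (ε : ℝ)⁻¹ - (ε+N)⁻¹ := by
    intro N
    have h := Finset.sum_range_sub' (fun i : ℕ => (ε+(i:ℝ))⁻¹) N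
    have : ∑ n ∈ Finset.range N, ((ε+(n:ℝ))⁻¹ - (ε+n+1)⁻¹)
        = ∑ i ∈ Finset.range N, ((ε+(i:ℝ))⁻¹ - (ε+((i+1:ℕ):ℝ))⁻¹) := by
      apply Finset.sum_congr rfl
      intro i _
      push_cast
      ring_nf
    rw [this, h]
    norm_num
  simp only [hps]
  have h1 : Tendsto (fun N : ℕ => (ε+(N:ℝ))⁻¹) atTop (nhds 0) := by
    apply Tendsto.inv_tendsto_atTop
    exact tendsto_atTop_add_const_left _ ε tendsto_natCast_atTop_atTop
  simpa using tendsto_const_nhds.sub h1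

lemma summable_b_even {ε : ℝ} (hε : 0 < ε) :
    Summable (fun k : ℕ => (ε+((2*k : ℕ):ℝ))⁻¹ - (ε+((2*k : ℕ):ℝ)+1)⁻¹) :=
  Summable.of_nonneg_of_le (fun k => b_nonneg hε (2*k))
    (fun k => b_anti hε (Nat.le_mul_of_pos_left k two_pos)) (hasSum_b hε).summable

lemma summable_b_odd {ε : ℝ} (hε : 0 < ε) :
    Summable (fun k : ℕ => (ε+((2*k+1 : ℕ):ℝ))⁻¹ - (ε+((2*k+1 : ℕ):ℝ)+1)⁻¹) :=
  Summable.of_nonneg_of_le (fun k => b_nonneg hε (2*k+1))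
    (fun k => b_anti hε (by omega)) (hasSum_b hε).summable

lemma gaussHyp_eq {ε : ℝ} (hε : 0 < ε) :
    gaussHyp 1 ε (2+ε) (-1)
      = ε * (1+ε) * ∑' n : ℕ, (-1)^n * ((ε+(n:ℝ))⁻¹ - (ε+n+1)⁻¹) := by
  rw [gaussHyp, ← tsum_mul_left]
  apply tsum_congr
  intro n
  rw [poch_one, mul_div_assoc ((n.factorial : ℝ)) (poch ε n) (poch (2+ε) n),
    poch_ratio hε, b_eq hε]
  have hfac : (n.factorial : ℝ) ≠ 0 := Nat.cast_ne_zero.mpr n.factorial_ne_zero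
  have h1 : (0:ℝ) < (ε+(n:ℝ)) := by positivity
  have h2 : (0:ℝ) < (ε+(n:ℝ)+1) := by positivity
  field_simp


lemma tsum_signed_b {ε : ℝ} (hε : 0 < ε) :
    ∑' n : ℕ, (-1:ℝ)^n * ((ε+(n:ℝ))⁻¹ - (ε+n+1)⁻¹)
      = 2 * (∑' k : ℕ, ((ε+((2*k:ℕ):ℝ))⁻¹ - (ε+((2*k:ℕ):ℝ)+1)⁻¹)) - ε⁻¹ := by
  have he : HasSum (fun k : ℕ => (-1:ℝ)^(2*k) * ((ε+((2*k:ℕ):ℝ))⁻¹ - (ε+((2*k:ℕ):ℝ)+1)⁻¹))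
      (∑' k : ℕ, ((ε+((2*k:ℕ):ℝ))⁻¹ - (ε+((2*k:ℕ):ℝ)+1)⁻¹)) := by
    have hfe : (fun k : ℕ => (-1:ℝ)^(2*k) * ((ε+((2*k:ℕ):ℝ))⁻¹ - (ε+((2*k:ℕ):ℝ)+1)⁻¹))
        = (fun k : ℕ => ((ε+((2*k:ℕ):ℝ))⁻¹ - (ε+((2*k:ℕ):ℝ)+1)⁻¹)) := by
      funext k; rw [pow_mul]; norm_num
    rw [hfe]; exact (summable_b_even hε).hasSum
  have ho : HasSum (fun k : ℕ => (-1:ℝ)^(2*k+1) * ((ε+((2*k+1:ℕ):ℝ))⁻¹ - (ε+((2*k+1:ℕ):ℝ)+1)⁻¹))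
      (-(∑' k : ℕ, ((ε+((2*k+1:ℕ):ℝ))⁻¹ - (ε+((2*k+1:ℕ):ℝ)+1)⁻¹))) := by
    have hfo : (fun k : ℕ => (-1:ℝ)^(2*k+1) * ((ε+((2*k+1:ℕ):ℝ))⁻¹ - (ε+((2*k+1:ℕ):ℝ)+1)⁻¹))
        = (fun k : ℕ => -((ε+((2*k+1:ℕ):ℝ))⁻¹ - (ε+((2*k+1:ℕ):ℝ)+1)⁻¹)) := by
      funext k; rw [pow_succ, pow_mul]; norm_num
    rw [hfo]; exact ((summable_b_odd hε).hasSum).neg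
  have hS := HasSum.even_add_odd
      (f := fun n : ℕ => (-1:ℝ)^n * ((ε+(n:ℝ))⁻¹ - (ε+n+1)⁻¹)) he ho
  have htot : (∑' k : ℕ, ((ε+((2*k:ℕ):ℝ))⁻¹ - (ε+((2*k:ℕ):ℝ)+1)⁻¹))
      + (∑' k : ℕ, ((ε+((2*k+1:ℕ):ℝ))⁻¹ - (ε+((2*k+1:ℕ):ℝ)+1)⁻¹)) = ε⁻¹ := by
    rw [tsum_even_add_odd (f := fun n : ℕ => ((ε+(n:ℝ))⁻¹ - (ε+n+1)⁻¹))
      (summable_b_even hε) (summable_b_odd hε)]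
    exact (hasSum_b hε).tsum_eq
  rw [hS.tsum_eq]
  linarith

lemma integral_A {ε : ℝ} (hε : 0 < ε) :
    ∫ t in (0:ℝ)..1, t^(ε-1)/(1+t)
      = ∑' k : ℕ, ((ε+((2*k:ℕ):ℝ))⁻¹ - (ε+((2*k:ℕ):ℝ)+1)⁻¹) := by
  set F : ℕ → ℝ → ℝ := fun k t => t^(ε-1) * (t^(2*k) * (1-t)) with hF
  have hIntI : ∀ k, IntervalIntegrable (F k) volume 0 1 := by
    intro k
    exact (intervalIntegrable_rpow' (by linarith)).mul_continuousOn
      ((continuous_pow _).mul (continuous_const.sub continuous_id)).continuousOn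
  have hval : ∀ k : ℕ, ∫ t in (0:ℝ)..1, F k t
      = (ε+((2*k:ℕ):ℝ))⁻¹ - (ε+((2*k:ℕ):ℝ)+1)⁻¹ := by
    intro k
    have hcg : ∀ t ∈ Ioc (0:ℝ) 1, F k t = t^(ε-1+((2*k:ℕ):ℝ)) - t^(ε-1+((2*k:ℕ):ℝ)+1) := by
      intro t ht
      have ht0 : 0 < t := ht.1
      rw [hF]
      simp only
      rw [← Real.rpow_natCast t (2*k), Real.rpow_add_one ht0.ne', Real.rpow_add ht0]
      ring
    have hk : (0:ℝ) ≤ ((2*k:ℕ):ℝ) := Nat.cast_nonneg _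
    rw [intervalIntegral.integral_of_le zero_le_one,
      setIntegral_congr_fun measurableSet_Ioc hcg,
      ← intervalIntegral.integral_of_le zero_le_one,
      intervalIntegral.integral_sub (intervalIntegrable_rpow' (by linarith))
        (intervalIntegrable_rpow' (by linarith)),
      integral_rpow (Or.inl (by linarith)), integral_rpow (Or.inl (by linarith))]
    rw [Real.one_rpow, Real.one_rpow, Real.zero_rpow (ne_of_gt (by linarith)),
      Real.zero_rpow (ne_of_gt (by linarith))]
    have h1 : ε - 1 + ((2*k:ℕ):ℝ) + 1 = ε + ((2*k:ℕ):ℝ) := by ring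
    rw [h1]
    norm_num
  have hIoo : ∀ k, IntegrableOn (F k) (Ioo (0:ℝ) 1) volume := by
    intro k
    exact ((intervalIntegrable_iff_integrableOn_Ioc_of_le
      zero_le_one).mp (hIntI k)).mono_set Ioo_subset_Ioc_self
  have hvalIoo : ∀ k : ℕ, ∫ t in Ioo (0:ℝ) 1, F k t
      = (ε+((2*k:ℕ):ℝ))⁻¹ - (ε+((2*k:ℕ):ℝ)+1)⁻¹ := by
    intro k
    rw [← integral_Ioc_eq_integral_Ioo, ← intervalIntegral.integral_of_le zero_le_one]
    exact hval k
  have hnorm : ∀ k : ℕ, ∫ t in Ioo (0:ℝ) 1, ‖F k t‖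
      = (ε+((2*k:ℕ):ℝ))⁻¹ - (ε+((2*k:ℕ):ℝ)+1)⁻¹ := by
    intro k
    rw [← hvalIoo k]
    apply setIntegral_congr_fun measurableSet_Ioo
    intro t ht
    apply Real.norm_of_nonneg
    have ht0 : (0:ℝ) < t := ht.1
    have ht1 : t < 1 := ht.2
    rw [hF]
    simp only
    have h0 : (0:ℝ) ≤ t ^ (ε-1) := Real.rpow_nonneg ht0.le _
    exact mul_nonneg h0 (mul_nonneg (pow_nonneg ht0.le _) (by linarith))
  have hswap : ∑' k : ℕ, ∫ t in Ioo (0:ℝ) 1, F k t = ∫ t in Ioo (0:ℝ) 1, ∑' k, F k t := by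
    apply MeasureTheory.integral_tsum_of_summable_integral_norm hIoo
    have := summable_b_even hε
    apply this.congr
    intro k
    exact (hnorm k).symm
  have hptw : ∀ t ∈ Ioo (0:ℝ) 1, ∑' k : ℕ, F k t = t^(ε-1)/(1+t) := by
    intro t ht
    have ht0 : (0:ℝ) < t := ht.1
    have ht1 : t < 1 := ht.2
    have hr0 : (0:ℝ) ≤ t^2 := by positivity
    have hr1 : t^2 < 1 := by nlinarith
    have hgeo := hasSum_geometric_of_lt_one hr0 hr1
    have hmul := hgeo.mul_left (t^(ε-1) * (1-t))
    have hfun : (fun k : ℕ => t^(ε-1) * (1-t) * (t^2)^k) = fun k => F k t := by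
      funext k
      rw [hF]
      simp only [← pow_mul]
      ring
    rw [hfun] at hmul
    rw [hmul.tsum_eq]
    have hd1 : (0:ℝ) < 1 - t^2 := by linarith
    have hd2 : (0:ℝ) < 1 + t := by linarith
    field_simp
    ring
  calc ∫ t in (0:ℝ)..1, t^(ε-1)/(1+t)
      = ∫ t in Ioo (0:ℝ) 1, t^(ε-1)/(1+t) := by
        rw [intervalIntegral.integral_of_le zero_le_one, integral_Ioc_eq_integral_Ioo]
    _ = ∫ t in Ioo (0:ℝ) 1, ∑' k, F k t :=
        (setIntegral_congr_fun measurableSet_Ioo (fun t ht => (hptw t ht).symm))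
    _ = ∑' k : ℕ, ∫ t in Ioo (0:ℝ) 1, F k t := hswap.symm
    _ = ∑' k : ℕ, ((ε+((2*k:ℕ):ℝ))⁻¹ - (ε+((2*k:ℕ):ℝ)+1)⁻¹) := tsum_congr hvalIoo

lemma cont_inv_one_add : ContinuousOn (fun t : ℝ => (1+t)⁻¹) (uIcc (0:ℝ) 1) := by
  apply ContinuousOn.inv₀ (continuous_const.add continuous_id).continuousOn
  intro t ht
  rw [uIcc_of_le zero_le_one] at ht
  have := ht.1
  show (1:ℝ) + t ≠ 0
  positivity

lemma intIntA {ε : ℝ} (hε : 0 < ε) :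
    IntervalIntegrable (fun t : ℝ => t^(ε-1)/(1+t)) volume 0 1 := by
  have : (fun t : ℝ => t^(ε-1)/(1+t)) = fun t => t^(ε-1) * (1+t)⁻¹ := by
    funext t; rw [div_eq_mul_inv]
  rw [this]
  exact (intervalIntegrable_rpow' (by linarith)).mul_continuousOn cont_inv_one_add

lemma intIntB {ε : ℝ} (hε : 0 < ε) :
    IntervalIntegrable (fun t : ℝ => t^ε/(1+t)^2) volume 0 1 := by
  apply ContinuousOn.intervalIntegrable
  apply ContinuousOn.div ((Real.continuous_rpow_const hε.le).continuousOn)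
    ((continuous_const.add continuous_id).pow 2).continuousOn
  intro t ht
  rw [uIcc_of_le zero_le_one] at ht
  have := ht.1
  show ((1:ℝ) + t)^2 ≠ 0
  positivity

lemma integral_B {ε : ℝ} (hε : 0 < ε) :
    2 * (∫ t in (0:ℝ)..1, t^ε/(1+t)^2)
      = 2*ε*(∫ t in (0:ℝ)..1, t^(ε-1)/(1+t)) - 1 := by
  have hderiv : ∀ t ∈ Ioo (0:ℝ) 1, HasDerivAt (fun t : ℝ => -2 * (t^ε/(1+t)))
      (-(2*ε) * (t^(ε-1)/(1+t)) + 2 * (t^ε/(1+t)^2)) t := by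
    intro t ht
    have ht0 : (0:ℝ) < t := ht.1
    have hd : (0:ℝ) < 1 + t := by linarith
    have h1 : HasDerivAt (fun t : ℝ => t^ε) (ε * t^(ε-1)) t :=
      Real.hasDerivAt_rpow_const (Or.inl ht0.ne')
    have h2 : HasDerivAt (fun t : ℝ => 1+t) 1 t := by
      simpa using (hasDerivAt_id t).const_add 1
    have h3 := (h1.div h2 hd.ne').const_mul (-2 : ℝ)
    refine h3.congr_deriv ?_
    field_simp
    ring
  have hcont : ContinuousOn (fun t : ℝ => -2 * (t^ε/(1+t))) (Icc 0 1) := by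
    apply ContinuousOn.mul continuousOn_const
    apply ContinuousOn.div ((Real.continuous_rpow_const hε.le).continuousOn)
      (continuous_const.add continuous_id).continuousOn
    intro t ht
    have := ht.1
    show (1:ℝ) + t ≠ 0
    positivity
  have hint : IntervalIntegrable
      (fun t : ℝ => -(2*ε) * (t^(ε-1)/(1+t)) + 2 * (t^ε/(1+t)^2)) volume 0 1 :=
    ((intIntA hε).const_mul _).add ((intIntB hε).const_mul _)
  have key := intervalIntegral.integral_eq_sub_of_hasDerivAt_of_le zero_le_one
    hcont hderiv hint
  rw [intervalIntegral.integral_add ((intIntA hε).const_mul _) ((intIntB hε).const_mul _),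
    intervalIntegral.integral_const_mul, intervalIntegral.integral_const_mul] at key
  rw [Real.one_rpow, Real.zero_rpow hε.ne'] at key
  norm_num at key
  linarith

lemma integral_subst {ε : ℝ} (hε : 0 < ε) :
    ∫ x in (0:ℝ)..1, ((1-x)/(1+x))^ε = 2 * ∫ t in (0:ℝ)..1, t^ε/(1+t)^2 := by
  have hmaps : ∀ x ∈ uIcc (0:ℝ) 1, (1-x)/(1+x) ∈ Icc (0:ℝ) 1 := by
    intro x hx
    rw [uIcc_of_le zero_le_one] at hx
    obtain ⟨h0, h1⟩ := hx
    have hd : (0:ℝ) < 1 + x := by linarith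
    constructor
    · apply div_nonneg (by linarith) hd.le
    · rw [div_le_one hd]; linarith
  have hf : ContinuousOn (fun x : ℝ => (1-x)/(1+x)) (uIcc (0:ℝ) 1) := by
    apply ContinuousOn.div (continuous_const.sub continuous_id).continuousOn
      (continuous_const.add continuous_id).continuousOn
    intro t ht
    rw [uIcc_of_le zero_le_one] at ht
    have := ht.1
    show (1:ℝ) + t ≠ 0
    positivity
  have hff' : ∀ x ∈ Ioo (min (0:ℝ) 1) (max (0:ℝ) 1),
      HasDerivWithinAt (fun x : ℝ => (1-x)/(1+x)) (-2/(1+x)^2) (Ioi x) x := by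
    intro x hx
    rw [min_eq_left zero_le_one, max_eq_right zero_le_one] at hx
    have hd : (0:ℝ) < 1 + x := by linarith [hx.1]
    have h1 : HasDerivAt (fun x : ℝ => 1-x) (-1) x := by
      exact (hasDerivAt_id' x).const_sub 1
    have h2 : HasDerivAt (fun x : ℝ => 1+x) 1 x := by
      simpa using (hasDerivAt_id x).const_add 1
    have h3 := h1.div h2 hd.ne'
    have : (-1 * (1+x) - (1-x) * 1)/(1+x)^2 = -2/(1+x)^2 := by
      congr 1; ring
    rw [this] at h3
    exact h3.hasDerivWithinAt
  have hf' : ContinuousOn (fun x : ℝ => -2/(1+x)^2) (uIcc (0:ℝ) 1) := by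
    apply ContinuousOn.div continuousOn_const
      ((continuous_const.add continuous_id).pow 2).continuousOn
    intro t ht
    rw [uIcc_of_le zero_le_one] at ht
    have := ht.1
    show ((1:ℝ) + t)^2 ≠ 0
    positivity
  have hg : ContinuousOn (fun x : ℝ => ((1-x)/(1+x))^ε)
      ((fun x : ℝ => (1-x)/(1+x)) '' uIcc (0:ℝ) 1) := by
    apply ContinuousOn.rpow_const
    · apply ContinuousOn.mono (s := Icc (0:ℝ) 1)
      · apply ContinuousOn.div (continuous_const.sub continuous_id).continuousOn
          (continuous_const.add continuous_id).continuousOn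
        intro t ht
        have := ht.1
        show (1:ℝ) + t ≠ 0
        positivity
      · rintro y ⟨x, hx, rfl⟩
        exact hmaps x hx
    · intro x _
      exact Or.inr hε.le
  have h := intervalIntegral.integral_comp_smul_deriv'' (a := (0:ℝ)) (b := 1)
    (f := fun x : ℝ => (1-x)/(1+x)) (f' := fun x : ℝ => -2/(1+x)^2)
    (g := fun x : ℝ => ((1-x)/(1+x))^ε) hf hff' hf' hg
  have hL : (∫ x in (0:ℝ)..1, (-2/(1+x)^2) •
        ((fun x : ℝ => ((1-x)/(1+x))^ε) ∘ (fun x : ℝ => (1-x)/(1+x))) x)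
      = ∫ t in (0:ℝ)..1, (-2) * (t^ε/(1+t)^2) := by
    apply intervalIntegral.integral_congr
    intro t ht
    rw [uIcc_of_le zero_le_one] at ht
    obtain ⟨h0, h1⟩ := ht
    have hd : (0:ℝ) < 1 + t := by linarith
    have hq1 : 1 - (1-t)/(1+t) = 2*t/(1+t) := by field_simp; ring
    have hq2 : 1 + (1-t)/(1+t) = 2/(1+t) := by field_simp; ring
    have harg : (1 - ((1-t)/(1+t)))/(1 + ((1-t)/(1+t))) = t := by
      rw [hq1, hq2, div_div_div_eq]
      rw [div_eq_iff (by positivity)]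
      ring
    simp only [Function.comp_apply, smul_eq_mul]
    rw [harg]
    ring
  rw [hL] at h
  have hends : (1 - (0:ℝ))/(1 + 0) = 1 ∧ (1 - (1:ℝ))/(1 + 1) = 0 := by norm_num
  rw [intervalIntegral.integral_const_mul] at h
  have h2 : (-2 : ℝ) * ∫ t in (0:ℝ)..1, t^ε/(1+t)^2
      = ∫ u in (1:ℝ)..0, ((1-u)/(1+u))^ε := by
    rw [h]
    norm_num
  rw [intervalIntegral.integral_symm (a:=(0:ℝ)) (b:=1)] at h2
  linarith

theorem normalization_constant_hypergeometric (ε : ℝ) (hε : 0 < ε) :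
    (∫ x in (-1 : ℝ)..1, ((1 + |x|) / (1 - |x|)) ^ (-ε))
      = 2 * gaussHyp 1 ε (2 + ε) (-1) / (1 + ε) := by
  have hG : Continuous (fun x : ℝ => ((1-|x|)/(1+|x|))^ε) := by
    have hb : Continuous (fun x : ℝ => (1-|x|)/(1+|x|)) := by
      apply Continuous.div (continuous_const.sub continuous_abs)
        (continuous_const.add continuous_abs)
      intro x
      show (1:ℝ) + |x| ≠ 0
      positivity
    exact hb.rpow_const (fun x => Or.inr hε.le)
  have hEq : EqOn (fun x : ℝ => ((1+|x|)/(1-|x|))^(-ε))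
      (fun x : ℝ => ((1-|x|)/(1+|x|))^ε) (uIcc (-1:ℝ) 1) := by
    intro x hx
    rw [uIcc_of_le (by norm_num)] at hx
    have hx1 : |x| ≤ 1 := abs_le.mpr ⟨hx.1, hx.2⟩
    have hx0 : 0 ≤ |x| := abs_nonneg x
    have hb : 0 ≤ (1+|x|)/(1-|x|) := div_nonneg (by linarith) (by linarith)
    simp only
    rw [Real.rpow_neg hb, ← Real.inv_rpow hb, inv_div]
  rw [intervalIntegral.integral_congr hEq]
  have hint : ∀ a b : ℝ, IntervalIntegrable (fun x : ℝ => ((1-|x|)/(1+|x|))^ε) volume a b :=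
    fun a b => hG.intervalIntegrable a b
  have hsym : ∫ x in (-1:ℝ)..0, ((1-|x|)/(1+|x|))^ε
      = ∫ x in (0:ℝ)..1, ((1-|x|)/(1+|x|))^ε := by
    have h := intervalIntegral.integral_comp_neg (a := (0:ℝ)) (b := 1)
      (f := fun x : ℝ => ((1-|x|)/(1+|x|))^ε)
    simp only [abs_neg, neg_zero] at h
    exact h.symm
  have hadd := intervalIntegral.integral_add_adjacent_intervals (hint (-1) 0) (hint 0 1)
  have habs : ∫ x in (0:ℝ)..1, ((1-|x|)/(1+|x|))^ε
      = ∫ x in (0:ℝ)..1, ((1-x)/(1+x))^ε := by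
    apply intervalIntegral.integral_congr
    intro x hx
    rw [uIcc_of_le zero_le_one] at hx
    simp only
    rw [abs_of_nonneg hx.1]
  rw [← hadd, hsym, habs, integral_subst hε, integral_B hε, integral_A hε,
    gaussHyp_eq hε, tsum_signed_b hε]
  have h1ε : (1:ℝ)+ε ≠ 0 := by positivity
  field_simp
  ring
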